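/- Let Φ be a finite root system with simple roots Δ and fundamental weights ω₁,...,ω_n, and let A be the span of a subset I of simple roots. Write the orthogonal projection δ_A of δ onto A^⊥ in the weight basis: δ_A = Σ_s b_s ω_s. Then b_s = 0 for s ∈ I and b_s ≥ 1 for s ∉ I. -/

import Mathlib

open Finset Submodule
open scoped Classical

local notation "⟪" x ", " y "⟫" => @inner ℝ _ _ x y

section Aux
variable {V : Type*} [NormedAddCommGroup V] [InnerProductSpace ℝ V]

lemma inner_self_pos' {x : V} (hx : x ≠ 0) : (0:ℝ) < ⟪x, x⟫ :=
  lt_of_le_of_ne real_inner_self_nonneg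
    (fun h => hx ((@inner_self_eq_zero ℝ _ _ _ _ x).1 h.symm))

lemma coeff_zero (Δ : Finset V)
    (hΔindep : LinearIndependent ℝ ((↑) : (↑Δ : Set V) → V))
    (f : V → ℝ) (hf : ∑ μ ∈ Δ, f μ • μ = 0) : ∀ μ ∈ Δ, f μ = 0 := by
  rw [linearIndependent_iff'] at hΔindep
  intro μ hμ
  exact hΔindep Finset.univ (fun i => f i)
    (by rw [Finset.sum_finset_coe (fun μ => f μ • μ) Δ]; exact hf) ⟨μ, hμ⟩ (Finset.mem_univ _)

lemma simple_nonpos (Φ pos Δ : Finset V)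
    (h0 : (0:V) ∉ Φ)
    (hrefl : ∀ α ∈ Φ, ∀ β ∈ Φ, β - (2 * ⟪β, α⟫ / ⟪α, α⟫) • α ∈ Φ)
    (hpos : pos ⊆ Φ)
    (hposneg : ∀ α ∈ Φ, (α ∈ pos ∧ -α ∉ pos) ∨ (α ∉ pos ∧ -α ∈ pos))
    (hΔpos : Δ ⊆ pos)
    (hΔindep : LinearIndependent ℝ ((↑) : (↑Δ : Set V) → V))
    (hΔcomb : ∀ β ∈ pos, ∃ c : V → ℝ, (∀ α ∈ Δ, 0 ≤ c α) ∧ β = ∑ α ∈ Δ, c α • α)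
    {α β : V} (hα : α ∈ Δ) (hβ : β ∈ Δ) (hne : α ≠ β) : ⟪α, β⟫ ≤ 0 := by
  by_contra h
  push_neg at h
  have hαΦ : α ∈ Φ := hpos (hΔpos hα)
  have hβΦ : β ∈ Φ := hpos (hΔpos hβ)
  have hα0 : α ≠ 0 := fun e => h0 (e ▸ hαΦ)
  have hαα : (0:ℝ) < ⟪α, α⟫ := inner_self_pos' hα0
  set k : ℝ := 2 * ⟪β, α⟫ / ⟪α, α⟫ with hk
  have hkpos : 0 < k := by
    apply div_pos _ hαα
    have : ⟪β, α⟫ = ⟪α, β⟫ := real_inner_comm α β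
    linarith
  have hγΦ : β - k • α ∈ Φ := hrefl α hαΦ β hβΦ
  rcases hposneg _ hγΦ with ⟨hγp, -⟩ | ⟨-, hγp⟩
  · obtain ⟨c, hc0, hcsum⟩ := hΔcomb _ hγp
    have hsum : ∑ μ ∈ Δ, (c μ + (if μ = α then k else 0) - (if μ = β then 1 else 0)) • μ = 0 := by
      simp only [add_smul, sub_smul, ite_smul, zero_smul, one_smul]
      rw [Finset.sum_sub_distrib, Finset.sum_add_distrib,
        Finset.sum_ite_eq' Δ α (fun μ => k • μ), Finset.sum_ite_eq' Δ β (fun μ => μ),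
        if_pos hα, if_pos hβ, ← hcsum]
      abel
    have h1 := coeff_zero Δ hΔindep _ hsum α hα
    rw [if_pos rfl, if_neg hne] at h1
    have h2 := hc0 α hα
    linarith
  · obtain ⟨c, hc0, hcsum⟩ := hΔcomb _ hγp
    rw [neg_sub] at hcsum
    have hsum : ∑ μ ∈ Δ, (c μ - (if μ = α then k else 0) + (if μ = β then 1 else 0)) • μ = 0 := by
      simp only [add_smul, sub_smul, ite_smul, zero_smul, one_smul]
      rw [Finset.sum_add_distrib, Finset.sum_sub_distrib,
        Finset.sum_ite_eq' Δ α (fun μ => k • μ), Finset.sum_ite_eq' Δ β (fun μ => μ),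
        if_pos hα, if_pos hβ, ← hcsum]
      abel
    have h1 := coeff_zero Δ hΔindep _ hsum β hβ
    rw [if_pos rfl, if_neg (Ne.symm hne)] at h1
    have h2 := hc0 β hβ
    linarith

lemma delta_pairing (Φ pos Δ : Finset V)
    (h0 : (0:V) ∉ Φ)
    (hrefl : ∀ α ∈ Φ, ∀ β ∈ Φ, β - (2 * ⟪β, α⟫ / ⟪α, α⟫) • α ∈ Φ)
    (hpos : pos ⊆ Φ)
    (hposneg : ∀ α ∈ Φ, (α ∈ pos ∧ -α ∉ pos) ∨ (α ∉ pos ∧ -α ∈ pos))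
    (hΔpos : Δ ⊆ pos)
    (hΔindep : LinearIndependent ℝ ((↑) : (↑Δ : Set V) → V))
    (hΔcomb : ∀ β ∈ pos, ∃ c : V → ℝ, (∀ α ∈ Δ, 0 ≤ c α) ∧ β = ∑ α ∈ Δ, c α • α)
    (δ : V) (hδ : δ = (2 : ℝ)⁻¹ • ∑ α ∈ pos, α)
    {α : V} (hα : α ∈ Δ) : ⟪α, α⟫ ≤ 2 * ⟪δ, α⟫ := by
  have hαΦ : α ∈ Φ := hpos (hΔpos hα)
  have hα0 : α ≠ 0 := fun e => h0 (e ▸ hαΦ)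
  have hαα : (0:ℝ) < ⟪α, α⟫ := inner_self_pos' hα0
  set k : V → ℝ := fun β => 2 * ⟪β, α⟫ / ⟪α, α⟫ with hkdef
  set σ : V → V := fun β => β - k β • α with hσdef
  have hσeq : ∀ β : V, σ β = β - k β • α := fun β => rfl
  have hkeq : ∀ β : V, k β = 2 * ⟪β, α⟫ / ⟪α, α⟫ := fun β => rfl
  have h1 : ∀ β : V, ⟪σ β, α⟫ = -⟪β, α⟫ := by
    intro β
    rw [hσeq, inner_sub_left, real_inner_smul_left, hkeq,
      div_mul_cancel₀ _ (ne_of_gt hαα)]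
    ring
  have h2 : ∀ β : V, k (σ β) = - k β := by
    intro β
    rw [hkeq (σ β), h1, hkeq]; ring
  have hinvol : ∀ β : V, σ (σ β) = β := by
    intro β
    rw [hσeq (σ β), h2, neg_smul, sub_neg_eq_add, hσeq, sub_add_cancel]
  set S : Finset V := pos.filter (fun β => ∃ t : ℝ, β = t • α) with hSdef
  set T : Finset V := pos.filter (fun β => ¬ ∃ t : ℝ, β = t • α) with hTdef
  have hT : ∀ β ∈ T, σ β ∈ T := by
    intro β hβT
    rw [hTdef, Finset.mem_filter] at hβT
    obtain ⟨hβpos, hβnm⟩ := hβT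
    have hβΦ : β ∈ Φ := hpos hβpos
    have hσΦ : σ β ∈ Φ := hrefl α hαΦ β hβΦ
    obtain ⟨c, hc0, hcsum⟩ := hΔcomb β hβpos
    have hμ0 : ∃ μ₀ ∈ Δ, μ₀ ≠ α ∧ 0 < c μ₀ := by
      by_contra hcon
      push_neg at hcon
      apply hβnm
      refine ⟨c α, ?_⟩
      rw [hcsum]
      exact Finset.sum_eq_single_of_mem α hα (fun μ hμ hne => by
        rw [le_antisymm (hcon μ hμ hne) (hc0 μ hμ), zero_smul])
    obtain ⟨μ₀, hμ₀Δ, hμ₀ne, hμ₀pos⟩ := hμ0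
    have hσmem : σ β ∈ pos := by
      rcases hposneg _ hσΦ with ⟨hp, -⟩ | ⟨-, hp⟩
      · exact hp
      · exfalso
        obtain ⟨d, hd0, hdsum⟩ := hΔcomb _ hp
        have hdsum' : k β • α - β = ∑ μ ∈ Δ, d μ • μ := by
          rw [← hdsum, hσeq, neg_sub]
        have hsum : ∑ μ ∈ Δ, (d μ + c μ - (if μ = α then k β else 0)) • μ = 0 := by
          simp only [add_smul, sub_smul, ite_smul, zero_smul]
          rw [Finset.sum_sub_distrib, Finset.sum_add_distrib,
            Finset.sum_ite_eq' Δ α (fun μ => k β • μ), if_pos hα, ← hcsum, ← hdsum']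
          abel
        have hz := coeff_zero Δ hΔindep _ hsum μ₀ hμ₀Δ
        rw [if_neg hμ₀ne] at hz
        have := hd0 μ₀ hμ₀Δ
        linarith
    rw [hTdef, Finset.mem_filter]
    refine ⟨hσmem, ?_⟩
    rintro ⟨t, ht⟩
    apply hβnm
    refine ⟨t + k β, ?_⟩
    have hb : β = σ β + k β • α := by rw [hσeq, sub_add_cancel]
    rw [add_smul, ← ht]
    exact hb
  have hsumT : ∑ β ∈ T, σ β = ∑ β ∈ T, β :=
    Finset.sum_nbij' σ σ hT hT (fun a _ => hinvol a) (fun a _ => hinvol a) (fun a _ => rfl)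
  have hkT : ∑ β ∈ T, ⟪β, α⟫ = 0 := by
    have h3 : ∑ β ∈ T, (β - k β • α) = ∑ β ∈ T, β := hsumT
    rw [Finset.sum_sub_distrib, ← Finset.sum_smul, sub_eq_self] at h3
    have h4 : ∑ β ∈ T, k β = 0 := by
      rcases smul_eq_zero.1 h3 with h | h
      · exact h
      · exact absurd h hα0
    have h5 : ∑ β ∈ T, k β = (∑ β ∈ T, ⟪β, α⟫) * (2 / ⟪α, α⟫) := by
      rw [Finset.sum_mul]
      exact Finset.sum_congr rfl (fun β _ => by rw [hkeq]; ring)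
    rw [h4] at h5
    have h6 : (2:ℝ) / ⟪α, α⟫ ≠ 0 := div_ne_zero two_ne_zero (ne_of_gt hαα)
    exact (mul_eq_zero.1 h5.symm).resolve_right h6
  have hSnn : ∀ β ∈ S, 0 ≤ ⟪β, α⟫ := by
    intro β hβS
    rw [hSdef, Finset.mem_filter] at hβS
    obtain ⟨hβpos, t, ht⟩ := hβS
    obtain ⟨c, hc0, hcsum⟩ := hΔcomb β hβpos
    have hsum : ∑ μ ∈ Δ, (c μ - (if μ = α then t else 0)) • μ = 0 := by
      simp only [sub_smul, ite_smul, zero_smul]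
      rw [Finset.sum_sub_distrib, Finset.sum_ite_eq' Δ α (fun μ => t • μ), if_pos hα,
        ← hcsum, ← ht, sub_self]
    have hz := coeff_zero Δ hΔindep _ hsum α hα
    rw [if_pos rfl, sub_eq_zero] at hz
    have ht0 : 0 ≤ t := hz ▸ hc0 α hα
    rw [ht, real_inner_smul_left]
    exact mul_nonneg ht0 (le_of_lt hαα)
  have hαS : α ∈ S := by
    rw [hSdef, Finset.mem_filter]
    exact ⟨hΔpos hα, 1, (one_smul ℝ α).symm⟩
  have hSge : ⟪α, α⟫ ≤ ∑ β ∈ S, ⟪β, α⟫ := Finset.single_le_sum hSnn hαS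
  have hsplit : ∑ β ∈ S, ⟪β, α⟫ + ∑ β ∈ T, ⟪β, α⟫ = ∑ β ∈ pos, ⟪β, α⟫ :=
    Finset.sum_filter_add_sum_filter_not pos _ _
  have hfinal : 2 * ⟪δ, α⟫ = ∑ β ∈ pos, ⟪β, α⟫ := by
    rw [hδ, real_inner_smul_left, sum_inner]
    ring
  rw [hfinal, ← hsplit, hkT, add_zero]
  exact hSge

end Aux

/-- Let `Φ` be a finite root system with simple system `Δ` and fundamental weights
`ω α` (for `α ∈ Δ`, characterized by `2 (α, ω β)/(α, α) = δ_{αβ}`), and let `A` be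
the span of a subset `I ⊆ Δ`.  Writing the orthogonal projection `δ_A` of the
half-sum `δ` of positive roots onto `A^⊥` in the weight basis,
`δ_A = Σ_{α ∈ Δ} b α • ω α`, one has `b α = 0` for `α ∈ I` and `b α ≥ 1` for
`α ∉ I`. -/
theorem stmt6 {V : Type*} [NormedAddCommGroup V] [InnerProductSpace ℝ V]
    [FiniteDimensional ℝ V]
    (Φ pos Δ : Finset V)
    (hspan : Submodule.span ℝ (↑Δ : Set V) = ⊤)
    (h0 : (0 : V) ∉ Φ)
    (hneg : ∀ α ∈ Φ, -α ∈ Φ)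
    (hrefl : ∀ α ∈ Φ, ∀ β ∈ Φ, β - (2 * ⟪β, α⟫ / ⟪α, α⟫) • α ∈ Φ)
    (hpos : pos ⊆ Φ)
    (hposneg : ∀ α ∈ Φ, (α ∈ pos ∧ -α ∉ pos) ∨ (α ∉ pos ∧ -α ∈ pos))
    (hΔpos : Δ ⊆ pos)
    (hΔindep : LinearIndependent ℝ ((↑) : (↑Δ : Set V) → V))
    (hΔcomb : ∀ β ∈ pos, ∃ c : V → ℝ, (∀ α ∈ Δ, 0 ≤ c α) ∧ β = ∑ α ∈ Δ, c α • α)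
    (δ : V) (hδ : δ = (2 : ℝ)⁻¹ • ∑ α ∈ pos, α)
    (ω : V → V)
    (hω : ∀ α ∈ Δ, ∀ β ∈ Δ, 2 * ⟪α, ω β⟫ = if α = β then ⟪α, α⟫ else 0)
    (I : Finset V) (hI : I ⊆ Δ)
    (A : Submodule ℝ V) (hA : A = span ℝ (↑I : Set V))
    (b : V → ℝ)
    (hb : ((orthogonalProjection Aᗮ δ : V)) = ∑ α ∈ Δ, b α • ω α) :
    ∀ α ∈ Δ, (α ∈ I → b α = 0) ∧ (α ∉ I → 1 ≤ b α) := by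
  have hnz : ∀ μ ∈ Δ, (0:ℝ) < ⟪μ, μ⟫ := fun μ hμ =>
    inner_self_pos' (fun e => h0 (e ▸ hpos (hΔpos hμ)))
  have hδpair : ∀ μ ∈ Δ, ⟪μ, μ⟫ ≤ 2 * ⟪δ, μ⟫ := fun μ hμ =>
    delta_pairing Φ pos Δ h0 hrefl hpos hposneg hΔpos hΔindep hΔcomb δ hδ hμ
  have hnonpos : ∀ μ ∈ Δ, ∀ ν ∈ Δ, μ ≠ ν → ⟪μ, ν⟫ ≤ 0 := fun μ hμ ν hν hne =>
    simple_nonpos Φ pos Δ h0 hrefl hpos hposneg hΔpos hΔindep hΔcomb hμ hν hne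
  set P : V := (orthogonalProjection Aᗮ δ : V) with hPdef
  have hPmem : P ∈ Aᗮ := SetLike.coe_mem _
  have hPorth : ∀ u ∈ A, ⟪u, P⟫ = 0 := (Submodule.mem_orthogonal A P).1 hPmem
  have hQmem : δ - P ∈ A := by
    have h : δ - P ∈ Aᗮᗮ := Submodule.sub_starProjection_mem_orthogonal (K := Aᗮ) δ
    rwa [Submodule.orthogonal_orthogonal] at h
  rw [hA] at hQmem
  obtain ⟨c, -, hcQ⟩ := mem_span_finset.1 hQmem
  -- inner products of δ - P with elements of I
  have hQν : ∀ ν ∈ I, ⟪ν, δ - P⟫ = ⟪ν, δ⟫ := by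
    intro ν hν
    rw [inner_sub_right, hPorth ν (hA ▸ Submodule.subset_span (Finset.mem_coe.2 hν)),
      sub_zero]
  have hQνpos : ∀ ν ∈ I, 0 ≤ ⟪ν, δ - P⟫ := by
    intro ν hν
    rw [hQν ν hν, real_inner_comm]
    have h1 := hδpair ν (hI hν)
    have h2 := hnz ν (hI hν)
    linarith
  -- nonnegativity of the coefficients c
  have hcnn : ∀ β ∈ I, 0 ≤ c β := by
    by_contra hcon
    push_neg at hcon
    obtain ⟨β₀, hβ₀I, hβ₀neg⟩ := hcon
    set N : Finset V := I.filter (fun β => c β < 0) with hNdef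
    set M : Finset V := I.filter (fun β => ¬ c β < 0) with hMdef
    set Qm : V := ∑ β ∈ N, (-c β) • β with hQmdef
    have hsplit : ∑ β ∈ N, c β • β + ∑ β ∈ M, c β • β = ∑ β ∈ I, c β • β :=
      Finset.sum_filter_add_sum_filter_not I _ _
    have hQmeq : Qm = ∑ β ∈ M, c β • β - (δ - P) := by
      rw [← hcQ, ← hsplit, hQmdef]
      simp only [neg_smul, Finset.sum_neg_distrib]
      abel
    have hterm1 : ⟪∑ β ∈ M, c β • β, Qm⟫ ≤ 0 := by
      rw [sum_inner]
      apply Finset.sum_nonpos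
      intro μ hμ
      rw [real_inner_smul_left, hQmdef, inner_sum]
      rw [hMdef, Finset.mem_filter] at hμ
      obtain ⟨hμI, hμnneg⟩ := hμ
      push_neg at hμnneg
      apply mul_nonpos_of_nonneg_of_nonpos hμnneg
      apply Finset.sum_nonpos
      intro ν hν
      rw [hNdef, Finset.mem_filter] at hν
      obtain ⟨hνI, hνneg⟩ := hν
      rw [real_inner_smul_right]
      have hμν : μ ≠ ν := by
        intro e; rw [e] at hμnneg; linarith
      have := hnonpos μ (hI hμI) ν (hI hνI) hμν
      nlinarith
    have hterm2 : 0 ≤ ⟪δ - P, Qm⟫ := by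
      rw [hQmdef, inner_sum]
      apply Finset.sum_nonneg
      intro ν hν
      rw [hNdef, Finset.mem_filter] at hν
      obtain ⟨hνI, hνneg⟩ := hν
      rw [real_inner_smul_right]
      have := hQνpos ν hνI
      rw [real_inner_comm] at this
      nlinarith
    have hQm2 : ⟪Qm, Qm⟫ ≤ 0 := by
      nth_rewrite 2 [hQmeq]
      rw [inner_sub_right]
      linarith [real_inner_comm Qm (∑ β ∈ M, c β • β), real_inner_comm (δ - P) Qm,
        hterm1, hterm2]
    have hQm0 : Qm = 0 := (@inner_self_eq_zero ℝ _ _ _ _ Qm).1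
      (le_antisymm hQm2 real_inner_self_nonneg)
    -- contradiction via linear independence
    have hNsub : N ⊆ Δ := fun x hx => hI (Finset.mem_filter.1 hx).1
    have hsum0 : ∑ μ ∈ Δ, (if μ ∈ N then -c μ else 0) • μ = 0 := by
      simp only [ite_smul, zero_smul]
      rw [← Finset.sum_filter, Finset.filter_mem_eq_inter, Finset.inter_eq_right.2 hNsub]
      exact hQm0
    have hz := coeff_zero Δ hΔindep _ hsum0 β₀ (hI hβ₀I)
    rw [if_pos (Finset.mem_filter.2 ⟨hβ₀I, hβ₀neg⟩)] at hz
    linarith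
  -- key pairing: 2⟪α, P⟫ = b α * ⟪α, α⟫
  intro α hαΔ
  have hbP : 2 * ⟪α, P⟫ = b α * ⟪α, α⟫ := by
    rw [hb, inner_sum]
    rw [Finset.mul_sum]
    have : ∀ β ∈ Δ, 2 * ⟪α, b β • ω β⟫ = if α = β then b β * ⟪α, α⟫ else 0 := by
      intro β hβ
      rw [real_inner_smul_right]
      have h := hω α hαΔ β hβ
      split_ifs with he
      · rw [← mul_assoc, mul_comm 2 (b β), mul_assoc, h, if_pos he]
      · rw [← mul_assoc, mul_comm 2 (b β), mul_assoc, h, if_neg he, mul_zero]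
    rw [Finset.sum_congr rfl this, Finset.sum_ite_eq Δ α (fun β => b β * ⟪α, α⟫),
      if_pos hαΔ]
  constructor
  · intro hαI
    have h1 : ⟪α, P⟫ = 0 :=
      hPorth α (hA ▸ Submodule.subset_span (Finset.mem_coe.2 hαI))
    have h2 := hnz α hαΔ
    rw [h1, mul_zero] at hbP
    rcases mul_eq_zero.1 hbP.symm with h | h
    · exact h
    · linarith
  · intro hαI
    have hQα : ⟪α, δ - P⟫ ≤ 0 := by
      rw [← hcQ, inner_sum]
      apply Finset.sum_nonpos
      intro ν hν
      rw [real_inner_smul_right]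
      have hαν : α ≠ ν := fun e => hαI (e ▸ hν)
      have := hnonpos α hαΔ ν (hI hν) hαν
      have := hcnn ν hν
      nlinarith
    have h1 := hδpair α hαΔ
    have h2 := hnz α hαΔ
    have h3 : 2 * ⟪α, P⟫ = 2 * ⟪α, δ⟫ - 2 * ⟪α, δ - P⟫ := by
      rw [inner_sub_right]; ring
    rw [real_inner_comm α δ] at h1
    have h4 : ⟪α, α⟫ ≤ b α * ⟪α, α⟫ := by linarith [hbP, h3, hQα, h1]
    nlinarith
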